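/- Let C be an η-prox-regular closed set in R^d and l = η/4. Then for every ε ∈ (0, l/2), the topological boundary of C_ε := {x : d_C(x) ≤ ε} equals {x ∈ R^d : d_C(x) = ε}. -/
import Mathlib


open Metric Set MeasureTheory
open scoped RealInnerProductSpace NNReal

def projSet {d : ℕ} (C : Set (EuclideanSpace ℝ (Fin d))) (z : EuclideanSpace ℝ (Fin d)) :
    Set (EuclideanSpace ℝ (Fin d)) :=
  {y | y ∈ C ∧ dist z y = Metric.infDist z C}

def proxNormalCone {d : ℕ} (C : Set (EuclideanSpace ℝ (Fin d)))
    (x : EuclideanSpace ℝ (Fin d)) : Set (EuclideanSpace ℝ (Fin d)) :=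
  {v | ∃ s : ℝ, 0 < s ∧ x ∈ projSet C (x + s • v)}

def IsProxRegular {d : ℕ} (η : ℝ) (C : Set (EuclideanSpace ℝ (Fin d))) : Prop :=
  ∀ x ∈ C, ∀ v ∈ proxNormalCone C x, v ≠ 0 →
    Metric.ball (x + (η / ‖v‖) • v) η ∩ C = ∅

/-- The boundary of the ε-enlargement of an η-prox-regular set is the ε-level set of d_C. -/
theorem frontier_enlargement {d : ℕ} (η : ℝ) (hη : 0 < η)
    (C : Set (EuclideanSpace ℝ (Fin d))) (hC : IsClosed C) (hreg : IsProxRegular η C)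
    (ε : ℝ) (hε : ε ∈ Set.Ioo 0 (η / 4 / 2)) :
    frontier {x : EuclideanSpace ℝ (Fin d) | Metric.infDist x C ≤ ε} =
      {x : EuclideanSpace ℝ (Fin d) | Metric.infDist x C = ε} := by
  obtain ⟨hε0, hε1⟩ := hε
  have hεη : ε < η := by linarith
  have hcont : Continuous fun x : EuclideanSpace ℝ (Fin d) => Metric.infDist x C :=
    Metric.continuous_infDist_pt C
  have hSclosed : IsClosed {x : EuclideanSpace ℝ (Fin d) | Metric.infDist x C ≤ ε} :=
    isClosed_le hcont continuous_const
  rcases eq_empty_or_nonempty C with hCe | hCne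
  · subst hCe
    have h1 : {x : EuclideanSpace ℝ (Fin d) | Metric.infDist x (∅ : Set _) ≤ ε} = univ := by
      ext x; simp [Metric.infDist_empty, hε0.le]
    have h2 : {x : EuclideanSpace ℝ (Fin d) | Metric.infDist x (∅ : Set _) = ε} = ∅ := by
      ext x; simp [Metric.infDist_empty, hε0.ne]
    rw [h1, h2, frontier_univ]
  ext x
  simp only [mem_setOf_eq]
  constructor
  · intro hx
    have hle : Metric.infDist x C ≤ ε := by
      have := frontier_subset_closure hx
      rwa [hSclosed.closure_eq] at this
    have hge : ε ≤ Metric.infDist x C := by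
      by_contra h
      push_neg at h
      have hopen : IsOpen {y : EuclideanSpace ℝ (Fin d) | Metric.infDist y C < ε} :=
        isOpen_lt hcont continuous_const
      have hsub : {y : EuclideanSpace ℝ (Fin d) | Metric.infDist y C < ε} ⊆
          {y : EuclideanSpace ℝ (Fin d) | Metric.infDist y C ≤ ε} := by
        intro y hy
        simp only [mem_setOf_eq] at hy ⊢
        exact le_of_lt hy
      exact hx.2 (interior_maximal hsub hopen h)
    linarith
  · intro hx
    refine ⟨subset_closure (le_of_eq hx), ?_⟩
    intro hint
    rw [mem_interior_iff_mem_nhds, Metric.mem_nhds_iff] at hint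
    obtain ⟨δ, hδ0, hδ⟩ := hint
    -- nearest point
    obtain ⟨x₀, hx₀C, hx₀d⟩ := hC.exists_infDist_eq_dist hCne x
    have hdist : dist x x₀ = ε := by rw [← hx₀d, hx]
    set v : EuclideanSpace ℝ (Fin d) := x - x₀ with hv
    have hnv : ‖v‖ = ε := by rw [hv, ← dist_eq_norm, hdist]
    have hvne : v ≠ 0 := by
      intro h; rw [h, norm_zero] at hnv; exact hε0.ne' hnv.symm
    have hvcone : v ∈ proxNormalCone C x₀ := by
      refine ⟨1, one_pos, hx₀C, ?_⟩
      have hxv : x₀ + (1 : ℝ) • v = x := by rw [one_smul, hv]; abel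
      rw [hxv, dist_comm]
      rw [hx₀d, dist_comm]
    have hball := hreg x₀ hx₀C v hvcone hvne
    set c : EuclideanSpace ℝ (Fin d) := x₀ + (η / ‖v‖) • v with hc
    have hCc : ∀ z ∈ C, η ≤ dist z c := by
      intro z hz
      by_contra h
      push_neg at h
      have : z ∈ Metric.ball c η ∩ C := ⟨by rwa [Metric.mem_ball], hz⟩
      rw [hball] at this
      exact this
    obtain ⟨t, htε, htδ, htη⟩ : ∃ t : ℝ, ε < t ∧ t - ε < δ ∧ t ≤ η := by
      refine ⟨ε + min (δ / 2) (η - ε), ?_, ?_, ?_⟩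
      · have : 0 < min (δ / 2) (η - ε) := lt_min (by linarith) (by linarith)
        linarith
      · have : min (δ / 2) (η - ε) ≤ δ / 2 := min_le_left _ _
        linarith
      · have : min (δ / 2) (η - ε) ≤ η - ε := min_le_right _ _
        linarith
    set y : EuclideanSpace ℝ (Fin d) := x₀ + (t / ε) • v with hy
    have hyx : dist y x < δ := by
      have hxeq : x = x₀ + (1 : ℝ) • v := by rw [one_smul, hv]; abel
      have : dist y x = ‖(t / ε) • v - (1 : ℝ) • v‖ := by
        rw [hy, hxeq, dist_eq_norm]
        congr 1
        abel
      rw [this, ← sub_smul, norm_smul, hnv, Real.norm_eq_abs]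
      have h1 : |t / ε - 1| = t / ε - 1 := by
        rw [abs_of_nonneg]
        have := (div_lt_div_iff₀ hε0 hε0).mpr (mul_lt_mul_of_pos_right htε hε0)
        have : 1 ≤ t / ε := by
          rw [le_div_iff₀ hε0, one_mul]; linarith
        linarith
      rw [h1]
      have : (t / ε - 1) * ε = t - ε := by field_simp
      rw [this]
      exact htδ
    have hyc : dist y c = η - t := by
      have : dist y c = ‖(t / ε) • v - (η / ‖v‖) • v‖ := by
        rw [hy, hc, dist_eq_norm]
        congr 1
        abel
      rw [this, hnv, ← sub_smul, norm_smul, hnv, Real.norm_eq_abs]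
      have h1 : |t / ε - η / ε| = η / ε - t / ε := by
        rw [abs_of_nonpos]
        · ring
        · have : t / ε ≤ η / ε := by gcongr
          linarith
      rw [h1]
      field_simp
    have hyfar : t ≤ Metric.infDist y C := by
      by_contra h
      push_neg at h
      obtain ⟨z, hz, hzd⟩ := (Metric.infDist_lt_iff hCne).mp h
      have h1 := hCc z hz
      have h2 := dist_triangle z y c
      rw [dist_comm y z] at hzd
      linarith [hyc]
    have hyS : y ∈ {x : EuclideanSpace ℝ (Fin d) | Metric.infDist x C ≤ ε} :=
      hδ (by rwa [Metric.mem_ball])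
    simp only [mem_setOf_eq] at hyS
    linarith
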